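/- Let A be a finite skew left brace with nilpotent additive group, and suppose the multiplicative group (A,∘) has a normal Sylow p-subgroup for some prime p dividing |A|. Then the Sylow p-subgroup A_p of (A,+) is an ideal of A and Soc(A_p) = Soc(A) ∩ A_p; in particular Soc(A_p) is an ideal of A. -/

import Mathlib

/-- A skew left brace: `(A,+)` and `(A,*)` are groups (the multiplicative
operation `*` plays the role of the circle operation `∘`) satisfying
`a ∘ (b + c) = a ∘ b - a + a ∘ c`. -/
class SkewBrace (A : Type*) extends AddGroup A, Group A where
  compat : ∀ a b c : A, a * (b + c) = a * b - a + a * c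

/-- The lambda map of a skew brace: `λ_a(b) = -a + a ∘ b`. -/
def lam {A : Type*} [SkewBrace A] (a b : A) : A := -a + a * b

/-- The star operation of a skew brace: `a * b := λ_a(b) - b`. -/
def starB {A : Type*} [SkewBrace A] (a b : A) : A := lam a b - b

/-- An ideal of a skew left brace: a `λ`-stable subgroup of `(A,+)` that is normal in
`(A,+)` and normal in `(A,∘)`. -/
def IsIdeal {A : Type*} [SkewBrace A] (I : AddSubgroup A) : Prop :=
  (∀ a : A, ∀ x ∈ I, lam a x ∈ I) ∧
  (∀ a : A, ∀ x ∈ I, a + x - a ∈ I) ∧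
  (∀ a : A, ∀ x ∈ I, a * x * a⁻¹ ∈ I)

section BraceLemmas

variable {A : Type*} [SkewBrace A]

theorem sb_mul_zero (a : A) : a * (0 : A) = a := by
  have h := SkewBrace.compat a 0 0
  rw [add_zero] at h
  have h' : (0 : A) + a * 0 = (a * 0 - a) + a * 0 := by rw [zero_add]; exact h
  have h2 := add_right_cancel h'
  exact (sub_eq_zero.mp h2.symm)

theorem sb_one_eq_zero : (1 : A) = 0 := by
  have := sb_mul_zero (1 : A)
  rw [one_mul] at this
  exact this.symm

theorem lam_add (a b c : A) : lam a (b + c) = lam a b + lam a c := by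
  show -a + a * (b + c) = (-a + a * b) + (-a + a * c)
  rw [SkewBrace.compat]
  simp [sub_eq_add_neg, add_assoc]

/-- `lam a` as an additive monoid hom. -/
def lamHom (a : A) : A →+ A := AddMonoidHom.mk' (lam a) (lam_add a)

theorem lam_zero (a : A) : lam a 0 = 0 := by
  show -a + a * 0 = 0
  rw [sb_mul_zero, neg_add_cancel]

theorem sb_mul_neg (a b : A) : a * (-b) = (a - a * b) + a := by
  have h := SkewBrace.compat a b (-b)
  rw [add_neg_cancel, sb_mul_zero] at h
  -- h : a = a * b - a + a * (-b)
  have : -(a * b - a) + a = -(a * b - a) + ((a * b - a) + a * (-b)) := by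
    rw [← h]
  rw [neg_add_cancel_left, neg_sub] at this
  rw [← this]

theorem lam_mul (a b c : A) : lam (a * b) c = lam a (lam b c) := by
  have h1 : lam a (lam b c) = lam a (-b) + lam a (b * c) := lam_add a (-b) (b * c)
  rw [h1]
  show -(a * b) + (a * b) * c = (-a + a * (-b)) + (-a + a * (b * c))
  rw [sb_mul_neg, mul_assoc]
  simp [sub_eq_add_neg, add_assoc]

theorem lam_one (c : A) : lam 1 c = c := by
  show -(1 : A) + 1 * c = c
  rw [one_mul, sb_one_eq_zero, neg_zero, zero_add]

theorem mul_eq_add_lam (a b : A) : a * b = a + lam a b := by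
  show a * b = a + (-a + a * b)
  rw [add_neg_cancel_left]

theorem lam_inv_cancel (a c : A) : lam a (lam a⁻¹ c) = c := by
  rw [← lam_mul, mul_inv_cancel, lam_one]

theorem inv_lam_cancel (a c : A) : lam a⁻¹ (lam a c) = c := by
  rw [← lam_mul, inv_mul_cancel, lam_one]

theorem lam_inv_self (a : A) : lam a⁻¹ a = -a⁻¹ := by
  show -a⁻¹ + a⁻¹ * a = -a⁻¹
  rw [inv_mul_cancel, sb_one_eq_zero, add_zero]

theorem sb_inv_eq (a : A) : a⁻¹ = -(lam a⁻¹ a) := by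
  rw [lam_inv_self, neg_neg]

theorem lam_zero_left (b : A) : lam 0 b = b := by
  rw [show (0 : A) = 1 from sb_one_eq_zero.symm, lam_one]

theorem soc_add {x y : A} (hx : ∀ b : A, lam x b = b ∧ x + b = b + x)
    (hy : ∀ b : A, lam y b = b ∧ y + b = b + y) :
    ∀ b : A, lam (x + y) b = b ∧ (x + y) + b = b + (x + y) := by
  intro b
  have hxy : x + y = x * y := by rw [mul_eq_add_lam, (hx y).1]
  constructor
  · rw [hxy, lam_mul, (hy b).1, (hx b).1]
  · rw [add_assoc, (hy b).2, ← add_assoc, (hx b).2, add_assoc]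

theorem soc_neg {x : A} (hx : ∀ b : A, lam x b = b ∧ x + b = b + x) :
    ∀ b : A, lam (-x) b = b ∧ (-x) + b = b + (-x) := by
  intro b
  have hinv : -x = x⁻¹ := by
    have h1 : x * (-x) = 1 := by
      rw [mul_eq_add_lam, (hx (-x)).1, add_neg_cancel, sb_one_eq_zero]
    exact (inv_eq_of_mul_eq_one_right h1).symm
  constructor
  · calc lam (-x) b = lam x⁻¹ (lam x b) := by rw [hinv, (hx b).1]
      _ = b := inv_lam_cancel x b
  · have h3 := (hx (-b)).2
    have h4 := congrArg Neg.neg h3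
    simp only [neg_add_rev, neg_neg] at h4
    exact h4.symm

theorem soc_lam (a x : A) (hx : ∀ b : A, lam x b = b ∧ x + b = b + x) :
    (∀ b : A, lam (lam a x) b = b ∧ lam a x + b = b + lam a x) ∧ a * x * a⁻¹ = lam a x := by
  have hcen : ∀ b : A, lam a x + b = b + lam a x := by
    intro b
    have h1 : lam a (x + lam a⁻¹ b) = lam a (lam a⁻¹ b + x) := by rw [(hx _).2]
    rw [lam_add, lam_add, lam_inv_cancel] at h1
    exact h1
  have hconj : a * x * a⁻¹ = lam a x := by
    have h1 : x * a⁻¹ = x + a⁻¹ := by rw [mul_eq_add_lam, (hx a⁻¹).1]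
    have h2 : a * (x + a⁻¹) = a * x - a + a * a⁻¹ := SkewBrace.compat a x a⁻¹
    have h3 : a * x * a⁻¹ = a * x - a := by
      rw [mul_assoc, h1, h2, mul_inv_cancel, sb_one_eq_zero, add_zero]
    rw [h3, mul_eq_add_lam a x, sub_eq_add_neg, add_assoc, hcen (-a), ← add_assoc,
      add_neg_cancel, zero_add]
  refine ⟨fun b => ⟨?_, hcen b⟩, hconj⟩
  rw [← hconj, lam_mul, lam_mul, (hx _).1, lam_inv_cancel]

end BraceLemmas

section GroupLemmas

variable {G : Type*} [Group G] [Finite G]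

theorem mem_sylow_of_pow_eq_one {q : ℕ} (hq : q.Prime) (R : Sylow q G)
    (hR : (R : Subgroup G).Normal) {g : G} {k : ℕ} (h : g ^ q ^ k = 1) :
    g ∈ (R : Subgroup G) := by
  haveI := Fact.mk hq
  have hpg : IsPGroup q (Subgroup.zpowers g) := by
    intro x
    refine ⟨k, ?_⟩
    have hx : (x : G) ^ q ^ k = 1 := by
      obtain ⟨n, hn⟩ := Subgroup.mem_zpowers_iff.mp x.2
      rw [← hn, ← zpow_natCast, ← zpow_mul, mul_comm, zpow_mul, zpow_natCast, h, one_zpow]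
    exact Subtype.ext (by simpa using hx)
  obtain ⟨R', hle⟩ := hpg.exists_le_sylow
  haveI := Sylow.unique_of_normal R hR
  have : R' = R := Subsingleton.elim _ _
  exact this ▸ hle (Subgroup.mem_zpowers g)

theorem disjoint_sylows {q r : ℕ} (hq : q.Prime) (hr : r.Prime) (hne : q ≠ r)
    (Q : Sylow q G) (R : Sylow r G) : Disjoint (Q : Subgroup G) (R : Subgroup G) := by
  rw [Subgroup.disjoint_def]
  intro x hxQ hxR
  obtain ⟨i, hi⟩ := Q.isPGroup' ⟨x, hxQ⟩
  obtain ⟨j, hj⟩ := R.isPGroup' ⟨x, hxR⟩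
  have hi' : x ^ q ^ i = 1 := by simpa using congrArg Subtype.val hi
  have hj' : x ^ r ^ j = 1 := by simpa using congrArg Subtype.val hj
  have h1 : orderOf x ∣ q ^ i := orderOf_dvd_of_pow_eq_one hi'
  have h2 : orderOf x ∣ r ^ j := orderOf_dvd_of_pow_eq_one hj'
  have hcop : Nat.Coprime (q ^ i) (r ^ j) :=
    ((Nat.coprime_primes hq hr).mpr hne).pow i j
  have : orderOf x = 1 := Nat.eq_one_of_dvd_coprimes hcop h1 h2
  exact orderOf_eq_one_iff.mp this

theorem commute_of_coprime_orders (hnil : Group.IsNilpotent G)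
    {p : ℕ} (hp : p.Prime) {x : G} {k : ℕ} (hx : x ^ p ^ k = 1) :
    ∀ m : ℕ, 0 < m → ¬ p ∣ m → ∀ y : G, y ^ m = 1 → Commute x y := by
  have hsyl : ∀ (q : ℕ) (_ : Fact q.Prime) (R : Sylow q G), (R : Subgroup G).Normal :=
    ((isNilpotent_of_finite_tfae (G := G)).out 0 3).mp hnil
  haveI := Fact.mk hp
  obtain ⟨Qp⟩ : Nonempty (Sylow p G) := inferInstance
  have hxQ : x ∈ (Qp : Subgroup G) := mem_sylow_of_pow_eq_one hp Qp (hsyl p ⟨hp⟩ Qp) hx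
  intro m
  induction m using Nat.strong_induction_on with
  | _ m ih =>
    intro hm0 hpm y hy
    by_cases h1 : m = 1
    · subst h1; rw [pow_one] at hy; subst hy; exact Commute.one_right x
    · set q := m.minFac with hqdef
      have hq : q.Prime := Nat.minFac_prime h1
      have hqm : q ∣ m := Nat.minFac_dvd m
      have hqp : q ≠ p := fun h => hpm (h ▸ hqm)
      set a := m.factorization q with hadef
      set m' := m / q ^ a with hm'def
      have hm : q ^ a * m' = m := Nat.ordProj_mul_ordCompl_eq_self m q
      have hqm' : ¬ q ∣ m' := Nat.not_dvd_ordCompl hq hm0.ne'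
      have hm'0 : 0 < m' := Nat.pos_of_ne_zero (by rintro h; rw [h, mul_zero] at hm; omega)
      have ha1 : 1 < q ^ a := by
        have ha0 : a ≠ 0 := by
          intro h
          rw [h, pow_zero, one_mul] at hm
          exact hqm' (hm ▸ hqm)
        exact Nat.one_lt_pow ha0 hq.one_lt
      have hm'm : m' < m := by
        calc m' = 1 * m' := (one_mul m').symm
        _ < q ^ a * m' := by exact (Nat.mul_lt_mul_right hm'0).mpr ha1
        _ = m := hm
      have hpm' : ¬ p ∣ m' := fun h => hpm (h.trans ⟨q ^ a, by rw [← hm, mul_comm]⟩)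
      have hcop : Nat.Coprime (q ^ a) m' :=
        Nat.Coprime.pow_left a (hq.coprime_iff_not_dvd.mpr hqm')
      obtain ⟨u, v, huv⟩ := hcop.isCoprime
      -- y1 is a q-element, y2 an m'-element
      set y1 := y ^ (v * (m' : ℤ)) with hy1def
      set y2 := y ^ (u * ((q : ℕ) ^ a : ℕ) : ℤ) with hy2def
      have hym : y ^ (m : ℤ) = 1 := by rw [zpow_natCast, hy]
      have hy1 : y1 ^ (q ^ a) = 1 := by
        rw [hy1def, ← zpow_natCast, ← zpow_mul]
        have : v * (m' : ℤ) * ((q ^ a : ℕ) : ℤ) = (m : ℤ) * v := by push_cast [← hm]; ring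
        rw [this, zpow_mul, hym, one_zpow]
      have hy2 : y2 ^ m' = 1 := by
        rw [hy2def, ← zpow_natCast, ← zpow_mul]
        have : u * ((q ^ a : ℕ) : ℤ) * (m' : ℤ) = (m : ℤ) * u := by push_cast [← hm]; ring
        rw [this, zpow_mul, hym, one_zpow]
      haveI := Fact.mk hq
      obtain ⟨Rq⟩ : Nonempty (Sylow q G) := inferInstance
      have hy1R : y1 ∈ (Rq : Subgroup G) :=
        mem_sylow_of_pow_eq_one hq Rq (hsyl q ⟨hq⟩ Rq) hy1
      have hc1 : Commute x y1 :=
        Subgroup.commute_of_normal_of_disjoint _ _ (hsyl p ⟨hp⟩ Qp) (hsyl q ⟨hq⟩ Rq)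
          (disjoint_sylows hp hq (Ne.symm hqp) Qp Rq) x y1 hxQ hy1R
      have hc2 : Commute x y2 := ih m' hm'm hm'0 hpm' y2 hy2
      have hyy : y1 * y2 = y := by
        rw [hy1def, hy2def, ← zpow_add]
        have : v * (m' : ℤ) + u * ((q ^ a : ℕ) : ℤ) = 1 := by
          rw [add_comm]; exact_mod_cast huv
        rw [this, zpow_one]
      rw [← hyy]
      exact hc1.mul_right hc2

end GroupLemmas

/-- Let `A` be a finite skew left brace of nilpotent type whose multiplicative group has a
normal Sylow `p`-subgroup.  Then the Sylow `p`-subgroup `A_p` of `(A,+)` (the set of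
elements of additive `p`-power order) is an ideal of `A`, the socle of the sub-brace
`A_p` equals `Soc(A) ∩ A_p`, and in particular `Soc(A_p)` is an ideal of `A`. -/
theorem sylow_ideal_soc {A : Type*} [SkewBrace A] [Finite A]
    (hnil : Group.IsNilpotent (Multiplicative A)) (p : ℕ) (hp : p.Prime)
    (hdvd : p ∣ Nat.card A) (P : Sylow p A) (hPn : (P : Subgroup A).Normal) :
    ∃ Sp : AddSubgroup A, (Sp : Set A) = {a : A | ∃ k : ℕ, p ^ k • a = 0} ∧
      IsIdeal Sp ∧
      {x : A | x ∈ Sp ∧ ∀ b ∈ Sp, lam x b = b ∧ x + b = b + x} =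
        {x : A | ∀ b : A, lam x b = b ∧ x + b = b + x} ∩ ↑Sp ∧
      ∃ J : AddSubgroup A,
        (J : Set A) = {x : A | x ∈ Sp ∧ ∀ b ∈ Sp, lam x b = b ∧ x + b = b + x} ∧
        IsIdeal J := by
  haveI := Fact.mk hp
  classical
  -- the Sylow p-subgroup of the additive group
  obtain ⟨Q⟩ : Nonempty (Sylow p (Multiplicative A)) := inferInstance
  have hsyl : ∀ (q : ℕ) (_ : Fact q.Prime) (R : Sylow q (Multiplicative A)),
      (R : Subgroup (Multiplicative A)).Normal :=
    ((isNilpotent_of_finite_tfae (G := Multiplicative A)).out 0 3).mp hnil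
  have hQn : (Q : Subgroup (Multiplicative A)).Normal := hsyl p ⟨hp⟩ Q
  let Sp : AddSubgroup A :=
    { carrier := {a : A | Multiplicative.ofAdd a ∈ (Q : Subgroup (Multiplicative A))}
      zero_mem' := (Q : Subgroup (Multiplicative A)).one_mem
      add_mem' := fun ha hb => (Q : Subgroup (Multiplicative A)).mul_mem ha hb
      neg_mem' := fun ha => (Q : Subgroup (Multiplicative A)).inv_mem ha }
  -- membership characterization
  have hmem : ∀ x : A, x ∈ Sp ↔ ∃ k : ℕ, p ^ k • x = 0 := by
    intro x
    constructor
    · intro hx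
      obtain ⟨k, hk⟩ := Q.isPGroup' ⟨Multiplicative.ofAdd x, hx⟩
      refine ⟨k, ?_⟩
      have h1 : (Multiplicative.ofAdd x) ^ p ^ k = 1 := by
        simpa using congrArg Subtype.val hk
      have := congrArg Multiplicative.toAdd h1
      simpa using this
    · rintro ⟨k, hk⟩
      have h1 : (Multiplicative.ofAdd x) ^ p ^ k = 1 := by
        have := congrArg Multiplicative.ofAdd hk
        simpa [ofAdd_nsmul] using this
      exact mem_sylow_of_pow_eq_one hp Q hQn h1
  -- lambda stability
  have hlam_smul : ∀ (a : A) (n : ℕ) (x : A), lam a (n • x) = n • lam a x :=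
    fun a n x => (lamHom a).map_nsmul n x
  have hSp_lam : ∀ (a x : A), x ∈ Sp → lam a x ∈ Sp := by
    intro a x hx
    obtain ⟨k, hk⟩ := (hmem x).1 hx
    refine (hmem _).2 ⟨k, ?_⟩
    rw [← hlam_smul, hk, lam_zero]
  -- additive normality
  have hadd_conj : ∀ (a x : A) (n : ℕ), n • (a + x - a) = a + n • x - a := by
    intro a x n
    induction n with
    | zero => simp
    | succ n ih =>
      rw [succ_nsmul, ih, succ_nsmul]
      simp [sub_eq_add_neg, add_assoc]
  have hSp_norm : ∀ (a x : A), x ∈ Sp → a + x - a ∈ Sp := by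
    intro a x hx
    obtain ⟨k, hk⟩ := (hmem x).1 hx
    refine (hmem _).2 ⟨k, ?_⟩
    rw [hadd_conj, hk]
    simp
  -- Sp is a multiplicative subgroup
  let S' : Subgroup A :=
    { carrier := (Sp : Set A)
      one_mem' := by
        show (1 : A) ∈ Sp
        rw [sb_one_eq_zero]
        exact Sp.zero_mem
      mul_mem' := by
        intro a b ha hb
        show a * b ∈ Sp
        rw [mul_eq_add_lam]
        exact Sp.add_mem ha (hSp_lam a b hb)
      inv_mem' := by
        intro a ha
        show a⁻¹ ∈ Sp
        rw [sb_inv_eq]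
        exact Sp.neg_mem (hSp_lam a⁻¹ a ha) }
  -- S' has the cardinality of a Sylow p-subgroup
  have hcard : Nat.card S' = p ^ (Nat.card A).factorization p := by
    have e1 : Nat.card S' = Nat.card Sp :=
      Nat.card_congr (Equiv.subtypeEquivRight (fun x => Iff.rfl))
    have e2 : Nat.card Sp = Nat.card (Q : Subgroup (Multiplicative A)) :=
      Nat.card_congr (Equiv.subtypeEquiv Multiplicative.ofAdd (fun x => Iff.rfl))
    have e3 : Nat.card (Multiplicative A) = Nat.card A :=
      Nat.card_congr Multiplicative.toAdd
    rw [e1, e2, Q.card_eq_multiplicity, e3]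
  -- S' = P, hence Sp is normal in (A,∘)
  haveI := Sylow.unique_of_normal P hPn
  have hS'P : S' = (P : Subgroup A) := by
    have h1 : Sylow.ofCard S' hcard = P := Subsingleton.elim _ _
    rw [← Sylow.coe_ofCard S' hcard, h1]
  have hconj : ∀ (a x : A), x ∈ Sp → a * x * a⁻¹ ∈ Sp := by
    intro a x hx
    have hxP : x ∈ (P : Subgroup A) := by rw [← hS'P]; exact hx
    have := hPn.conj_mem x hxP a
    rw [← hS'P] at this
    exact this
  -- commuting with p'-elements
  have hcomm : ∀ x : A, x ∈ Sp → ∀ m : ℕ, 0 < m → ¬ p ∣ m →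
      ∀ y : A, m • y = 0 → x + y = y + x := by
    intro x hx m hm0 hpm y hy
    obtain ⟨k, hk⟩ := (hmem x).1 hx
    have hx' : (Multiplicative.ofAdd x) ^ p ^ k = 1 := by
      have := congrArg Multiplicative.ofAdd hk
      simpa [ofAdd_nsmul] using this
    have hy' : (Multiplicative.ofAdd y) ^ m = 1 := by
      have := congrArg Multiplicative.ofAdd hy
      simpa [ofAdd_nsmul] using this
    have hc := commute_of_coprime_orders hnil hp hx' m hm0 hpm (Multiplicative.ofAdd y) hy'
    have := congrArg Multiplicative.toAdd hc
    simpa using this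
  -- decomposition of an element into p-part and p'-part
  have hdecomp : ∀ b : A, ∃ bp bq : A, b = bp + bq ∧ bp ∈ Sp ∧
      ∃ m : ℕ, 0 < m ∧ m • bq = 0 ∧ ¬ p ∣ m := by
    intro b
    set n := addOrderOf b with hndef
    have hn0 : 0 < n := addOrderOf_pos b
    set a := n.factorization p with hadef
    set m := n / p ^ a with hmdef
    have hm : p ^ a * m = n := Nat.ordProj_mul_ordCompl_eq_self n p
    have hpm : ¬ p ∣ m := Nat.not_dvd_ordCompl hp hn0.ne'
    have hm0 : 0 < m := Nat.pos_of_ne_zero (by rintro h; rw [h, mul_zero] at hm; omega)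
    have hcop : Nat.Coprime (p ^ a) m :=
      Nat.Coprime.pow_left a (hp.coprime_iff_not_dvd.mpr hpm)
    obtain ⟨u, v, huv⟩ := hcop.isCoprime
    have hnb : (n : ℤ) • b = 0 := by
      rw [natCast_zsmul, addOrderOf_nsmul_eq_zero]
    have hkill : ∀ t : ℤ, (n : ℤ) ∣ t → t • b = 0 := by
      rintro t ⟨s, rfl⟩
      rw [mul_comm, mul_zsmul, hnb, smul_zero]
    refine ⟨(v * (m : ℤ)) • b, (u * ((p ^ a : ℕ) : ℤ)) • b, ?_, ?_, m, hm0, ?_, hpm⟩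
    · have h1 : ((u * ((p ^ a : ℕ) : ℤ)) + (v * (m : ℤ))) • b = b := by
        have : (u * ((p ^ a : ℕ) : ℤ)) + (v * (m : ℤ)) = 1 := by exact_mod_cast huv
        rw [this, one_zsmul]
      have h3 : ((v * (m : ℤ)) + (u * ((p ^ a : ℕ) : ℤ))) • b
          = (v * (m : ℤ)) • b + (u * ((p ^ a : ℕ) : ℤ)) • b := add_zsmul b _ _
      rw [← h3, add_comm (v * (m : ℤ))]
      exact h1.symm
    · refine (hmem _).2 ⟨a, ?_⟩
      have : ((p ^ a : ℕ) : ℤ) • ((v * (m : ℤ)) • b) = 0 := by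
        rw [← mul_zsmul]
        exact hkill _ ⟨v, by push_cast [← hm]; ring⟩
      rwa [natCast_zsmul] at this
    · have : ((m : ℕ) : ℤ) • ((u * ((p ^ a : ℕ) : ℤ)) • b) = 0 := by
        rw [← mul_zsmul]
        exact hkill _ ⟨u, by push_cast [← hm]; ring⟩
      rwa [natCast_zsmul] at this
  -- the key fixing lemma: elements of Sp fix p'-elements under lambda
  have hlamfix : ∀ x : A, x ∈ Sp → ∀ (y : A) (m : ℕ), 0 < m → ¬ p ∣ m → m • y = 0 →
      lam x y = y := by
    intro x hx y m hm0 hpm hmy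
    set c := lam x y with hc
    have hmc : m • c = 0 := by
      rw [hc, ← hlam_smul, hmy, lam_zero]
    have hx' : y⁻¹ * x * y ∈ Sp := by
      have := hconj y⁻¹ x hx
      simpa using this
    set d := lam y (y⁻¹ * x * y) with hd
    have hdSp : d ∈ Sp := hSp_lam _ _ hx'
    have key : x + c = y + d := by
      have h1 : x * y = x + c := mul_eq_add_lam x y
      have h2 : y * (y⁻¹ * x * y) = y + d := mul_eq_add_lam y _
      have h3 : x * y = y * (y⁻¹ * x * y) := by group
      rw [h1, h2] at h3
      exact h3
    have he : y - c ∈ Sp := by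
      have h4 : y = x + c - d := by rw [key]; rw [add_sub_cancel_right]
      have h5 : y - c = x + (c + -d + -c) := by
        rw [h4]
        simp [sub_eq_add_neg, add_assoc]
      rw [h5]
      refine Sp.add_mem hx ?_
      have := hSp_norm c (-d) (Sp.neg_mem hdSp)
      simpa [sub_eq_add_neg] using this
    have hme : m • (y - c) = 0 := by
      have hec : AddCommute (y - c) c := hcomm (y - c) he m hm0 hpm c hmc
      have h6 : m • y = m • (y - c) + m • c := by
        calc m • y = m • ((y - c) + c) := by rw [sub_add_cancel]
          _ = m • (y - c) + m • c := hec.add_nsmul m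
      rw [hmy, hmc, add_zero] at h6
      exact h6.symm
    obtain ⟨k, hk⟩ := (hmem _).1 he
    have hcop : Nat.Coprime (p ^ k) m :=
      Nat.Coprime.pow_left k (hp.coprime_iff_not_dvd.mpr hpm)
    obtain ⟨u, v, huv⟩ := hcop.isCoprime
    have hyc : y - c = 0 := by
      have h7 : (1 : ℤ) • (y - c) = 0 := by
        rw [← huv, add_zsmul, mul_zsmul, mul_zsmul, natCast_zsmul, natCast_zsmul, hk, hme,
          smul_zero, smul_zero, add_zero]
      simpa using h7
    rw [hc] at *
    have := sub_eq_zero.mp hyc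
    exact this.symm
  -- the socle equality
  have hsoc : {x : A | x ∈ Sp ∧ ∀ b ∈ Sp, lam x b = b ∧ x + b = b + x} =
      {x : A | ∀ b : A, lam x b = b ∧ x + b = b + x} ∩ ↑Sp := by
    ext x
    simp only [Set.mem_setOf_eq, Set.mem_inter_iff, SetLike.mem_coe]
    constructor
    · rintro ⟨hx, h⟩
      refine ⟨?_, hx⟩
      intro b
      obtain ⟨bp, bq, rfl, hbp, m, hm0, hmq, hpm⟩ := hdecomp b
      have h1 : lam x bp = bp := (h bp hbp).1
      have h2 : x + bp = bp + x := (h bp hbp).2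
      have h3 : lam x bq = bq := hlamfix x hx bq m hm0 hpm hmq
      have h4 : x + bq = bq + x := hcomm x hx m hm0 hpm bq hmq
      constructor
      · rw [lam_add, h1, h3]
      · calc x + (bp + bq) = (x + bp) + bq := (add_assoc _ _ _).symm
          _ = bp + (x + bq) := by rw [h2, add_assoc]
          _ = bp + bq + x := by rw [h4, add_assoc]
    · rintro ⟨h, hx⟩
      exact ⟨hx, fun b _ => h b⟩
  -- the socle of A as an additive subgroup
  let SocA : AddSubgroup A :=
    { carrier := {x : A | ∀ b : A, lam x b = b ∧ x + b = b + x}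
      zero_mem' := fun b => ⟨lam_zero_left b, by rw [zero_add, add_zero]⟩
      add_mem' := fun hx hy => soc_add hx hy
      neg_mem' := fun hx => soc_neg hx }
  refine ⟨Sp, ?_, ⟨hSp_lam, hSp_norm, hconj⟩, hsoc, SocA ⊓ Sp, ?_, ?_, ?_, ?_⟩
  · ext x
    exact hmem x
  · rw [hsoc]
    rfl
  · -- lambda stability of the socle ideal
    intro a x hx
    obtain ⟨hxS, hxP⟩ := hx
    exact ⟨(soc_lam a x hxS).1, hSp_lam a x hxP⟩
  · -- additive normality
    intro a x hx
    obtain ⟨hxS, hxP⟩ := hx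
    have : a + x - a = x := by rw [← (hxS a).2, add_sub_cancel_right]
    rw [this]
    exact ⟨hxS, hxP⟩
  · -- multiplicative normality
    intro a x hx
    obtain ⟨hxS, hxP⟩ := hx
    rw [(soc_lam a x hxS).2]
    exact ⟨(soc_lam a x hxS).1, hSp_lam a x hxP⟩
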